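/- Let v_1, ..., v_N ∈ C^r form an ETF and define the r×r real matrix R with entries R_{kℓ} = ∑_{i=1}^N |(v_i)_k|²|(v_i)_ℓ|². Then R ⪯ ((1 - 1/r)/(1 - 1/N))·I_r + ((N/r - 1)/(r(1 - 1/N)))·J_r in the Loewner order, where J_r is the all-ones matrix. -/

import Mathlib

open Matrix BigOperators

private lemma sum_swap3' {M : Type*} [AddCommMonoid M] {α β γ : Type*} [Fintype α] [Fintype β]
    [Fintype γ] (f : α → β → γ → M) :
    ∑ k, ∑ l, ∑ i, f k l i = ∑ i, ∑ k, ∑ l, f k l i := by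
  calc ∑ k, ∑ l, ∑ i, f k l i = ∑ k, ∑ i, ∑ l, f k l i :=
        Finset.sum_congr rfl fun k _ => Finset.sum_comm
    _ = ∑ i, ∑ k, ∑ l, f k l i := Finset.sum_comm

private lemma sum_swap4' {M : Type*} [AddCommMonoid M] {α β γ δ : Type*} [Fintype α] [Fintype β]
    [Fintype γ] [Fintype δ] (f : α → β → γ → δ → M) :
    ∑ k, ∑ l, ∑ i, ∑ j, f k l i j = ∑ i, ∑ j, ∑ k, ∑ l, f k l i j := by
  calc ∑ k, ∑ l, ∑ i, ∑ j, f k l i j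
      = ∑ k, ∑ i, ∑ l, ∑ j, f k l i j :=
        Finset.sum_congr rfl fun k _ => Finset.sum_comm
    _ = ∑ i, ∑ k, ∑ l, ∑ j, f k l i j := Finset.sum_comm
    _ = ∑ i, ∑ k, ∑ j, ∑ l, f k l i j :=
        Finset.sum_congr rfl fun i _ => Finset.sum_congr rfl fun k _ => Finset.sum_comm
    _ = ∑ i, ∑ j, ∑ k, ∑ l, f k l i j :=
        Finset.sum_congr rfl fun i _ => Finset.sum_comm

/-- Frobenius norm of `B = ∑ i c_i v_i v_i^*` equals the Gram-weighted sum. -/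
private lemma frobenius_gram' (n m : ℕ) (c : Fin m → ℝ) (w : Fin m → Fin n → ℂ) :
    ∑ k, ∑ l, ‖∑ i, (c i : ℂ) * ((starRingEnd ℂ) (w i k) * w i l)‖ ^ 2
      = ∑ i, ∑ j, c i * c j * ‖∑ k, (starRingEnd ℂ) (w i k) * w j k‖ ^ 2 := by
  have key : ∑ k, ∑ l, ((∑ i, (c i : ℂ) * ((starRingEnd ℂ) (w i k) * w i l)) *
        (starRingEnd ℂ) (∑ i, (c i : ℂ) * ((starRingEnd ℂ) (w i k) * w i l)))
      = ∑ i, ∑ j, ((c i : ℂ) * (c j : ℂ)) *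
          ((∑ k, (starRingEnd ℂ) (w i k) * w j k) *
            (starRingEnd ℂ) (∑ k, (starRingEnd ℂ) (w i k) * w j k)) := by
    have expand : ∀ k l, ((∑ i, (c i : ℂ) * ((starRingEnd ℂ) (w i k) * w i l)) *
        (starRingEnd ℂ) (∑ i, (c i : ℂ) * ((starRingEnd ℂ) (w i k) * w i l)))
        = ∑ i, ∑ j, ((c i : ℂ) * (c j : ℂ)) *
            (((starRingEnd ℂ) (w i k) * w j k) * (w i l * (starRingEnd ℂ) (w j l))) := by
      intro k l
      rw [map_sum, Finset.sum_mul_sum]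
      refine Finset.sum_congr rfl fun i _ => Finset.sum_congr rfl fun j _ => ?_
      simp only [_root_.map_mul, Complex.conj_conj, Complex.conj_ofReal]
      ring
    simp only [expand]
    rw [sum_swap4']
    refine Finset.sum_congr rfl fun i _ => Finset.sum_congr rfl fun j _ => ?_
    simp only [map_sum, _root_.map_mul, Complex.conj_conj]
    rw [Finset.sum_mul_sum]
    simp only [Finset.mul_sum]
  have cast1 : ∀ z : ℂ, z * (starRingEnd ℂ) z = ((‖z‖ ^ 2 : ℝ) : ℂ) := by
    intro z; rw [Complex.mul_conj]; norm_cast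
    rw [Complex.normSq_eq_norm_sq]
  simp only [cast1] at key
  exact_mod_cast key

set_option maxHeartbeats 1000000 in
/-- The main ETF matrix inequality (Theorem 3.1 of the paper):
    `R ⪯ ((1-1/r)/(1-1/N)) I + ((N/r-1)/(r(1-1/N))) J`. -/
theorem stmt_10 (N r : ℕ) (hr : 2 ≤ r) (hNr : r < N)
    (v : Fin N → Fin r → ℂ)
    (hunit : ∀ i, ∑ k, ‖v i k‖ ^ 2 = 1)
    (htight : (∑ i, Matrix.vecMulVec (v i) (fun l => (starRingEnd ℂ) (v i l)))
      = ((N : ℂ) / (r : ℂ)) • (1 : Matrix (Fin r) (Fin r) ℂ))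
    (heq : ∀ i j : Fin N, i ≠ j →
      ‖∑ k, (starRingEnd ℂ) (v i k) * v j k‖
        = Real.sqrt (((N : ℝ) - (r : ℝ)) / ((r : ℝ) * ((N : ℝ) - 1))))
    (R : Matrix (Fin r) (Fin r) ℝ)
    (hR : R = Matrix.of fun k l => ∑ i, ‖v i k‖ ^ 2 * ‖v i l‖ ^ 2) :
    (((1 - 1 / (r : ℝ)) / (1 - 1 / (N : ℝ))) • (1 : Matrix (Fin r) (Fin r) ℝ)
      + (((N : ℝ) / (r : ℝ) - 1) / ((r : ℝ) * (1 - 1 / (N : ℝ)))) •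
          Matrix.of (fun _ _ => (1 : ℝ))
      - R).PosSemidef := by
  have hrR : (2:ℝ) ≤ (r:ℝ) := by exact_mod_cast hr
  have hNrR : (r:ℝ) < (N:ℝ) := by exact_mod_cast hNr
  have hrpos : (0:ℝ) < r := by linarith
  have hN1 : (1:ℝ) < N := by linarith
  have hNpos : (0:ℝ) < N := by linarith
  have hr0 : (r:ℝ) ≠ 0 := ne_of_gt hrpos
  have hN0 : (N:ℝ) ≠ 0 := ne_of_gt hNpos
  have hNm1 : (N:ℝ) - 1 ≠ 0 := by nlinarith
  have h1N : 1 - 1/(N:ℝ) ≠ 0 := by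
    have : 1 - 1/(N:ℝ) = ((N:ℝ)-1)/N := by field_simp
    rw [this]; exact div_ne_zero hNm1 hN0
  set μ2 : ℝ := ((N:ℝ) - r) / (r * ((N:ℝ) - 1)) with hμ2
  set a : ℝ := (1 - 1 / (r : ℝ)) / (1 - 1 / (N : ℝ)) with ha
  set b : ℝ := ((N : ℝ) / (r : ℝ) - 1) / ((r : ℝ) * (1 - 1 / (N : ℝ))) with hb
  have hμ2nonneg : 0 ≤ μ2 := by
    apply div_nonneg <;> nlinarith
  have haμ : a = 1 - μ2 := by
    rw [ha, hμ2]; field_simp; ring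
  -- column sums
  have hcol : ∀ k, ∑ i, ‖v i k‖ ^ 2 = (N:ℝ) / r := by
    intro k
    have h := congrFun (congrFun htight k) k
    rw [Matrix.sum_apply] at h
    simp only [Matrix.vecMulVec_apply, Matrix.smul_apply, Matrix.one_apply_eq, smul_eq_mul,
      mul_one] at h
    have h2 : ((∑ i, ‖v i k‖ ^ 2 : ℝ) : ℂ) = ((N:ℝ)/r : ℝ) := by
      push_cast
      rw [← h]
      congr 1; funext i
      rw [Complex.mul_conj, Complex.normSq_eq_norm_sq]
      push_cast; ring
    exact_mod_cast h2
  -- gram entries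
  have hgd : ∀ i, (∑ k, (starRingEnd ℂ) (v i k) * v i k) = 1 := by
    intro i
    have h3 : ((∑ k, ‖v i k‖ ^ 2 : ℝ) : ℂ) = ∑ k, (starRingEnd ℂ) (v i k) * v i k := by
      push_cast
      congr 1; funext k
      rw [mul_comm ((starRingEnd ℂ) (v i k)) (v i k), Complex.mul_conj,
        Complex.normSq_eq_norm_sq]
      push_cast; ring
    rw [← h3, hunit i]; norm_num
  have hgoff : ∀ i j, i ≠ j → ‖∑ k, (starRingEnd ℂ) (v i k) * v j k‖ ^ 2 = μ2 := by
    intro i j hij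
    rw [heq i j hij, Real.sq_sqrt hμ2nonneg]
  rw [Matrix.posSemidef_iff_dotProduct_mulVec]
  constructor
  · -- Hermitian
    have hsum : ∀ k l : Fin r, ∑ i, ‖v i l‖ ^ 2 * ‖v i k‖ ^ 2 = ∑ i, ‖v i k‖ ^ 2 * ‖v i l‖ ^ 2 :=
      fun k l => Finset.sum_congr rfl fun i _ => mul_comm _ _
    unfold Matrix.IsHermitian
    ext k l
    simp only [Matrix.conjTranspose_apply, Matrix.sub_apply, Matrix.add_apply,
      Matrix.smul_apply, Matrix.one_apply, Matrix.of_apply, hR, star_trivial, smul_eq_mul,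
      hsum k l]
    by_cases h : k = l
    · subst h; rfl
    · simp [h, Ne.symm h]
  · intro x
    simp only [star_trivial]
    set t : ℝ := (∑ k, x k) / r with ht
    set y : Fin r → ℝ := fun k => x k - t with hy
    have hy0 : ∑ k, y k = 0 := by
      simp only [hy, Finset.sum_sub_distrib, Finset.sum_const, Finset.card_univ,
        Fintype.card_fin, nsmul_eq_mul, ht]
      field_simp
      ring
    set c : Fin N → ℝ := fun i => ∑ k, y k * ‖v i k‖ ^ 2 with hc
    have hc0 : ∑ i, c i = 0 := by
      rw [hc]
      rw [Finset.sum_comm]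
      have h4 : ∀ k, ∑ i, y k * ‖v i k‖ ^ 2 = y k * ((N:ℝ)/r) := by
        intro k; rw [← Finset.mul_sum, hcol k]
      simp only [h4, ← Finset.sum_mul, hy0, zero_mul]
    set bb : Fin r → ℝ := fun k => ∑ i, c i * ‖v i k‖ ^ 2 with hbb
    have hSb : ∑ i, c i ^ 2 = ∑ k, y k * bb k := by
      have h1 : ∀ i, c i ^ 2 = ∑ k, c i * (y k * ‖v i k‖ ^ 2) := by
        intro i
        rw [← Finset.mul_sum, ← congrFun hc i, sq]
      simp only [h1, hbb]
      rw [Finset.sum_comm]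
      refine Finset.sum_congr rfl fun k _ => ?_
      rw [Finset.mul_sum]
      exact Finset.sum_congr rfl fun i _ => by ring
    -- Frobenius identity
    have hBg := frobenius_gram' r N c v
    have hbB : ∑ k, bb k ^ 2
        ≤ ∑ k, ∑ l, ‖∑ i, (c i : ℂ) * ((starRingEnd ℂ) (v i k) * v i l)‖ ^ 2 := by
      refine Finset.sum_le_sum fun k _ => ?_
      have hdiag : (∑ i, (c i : ℂ) * ((starRingEnd ℂ) (v i k) * v i k)) = ((bb k : ℝ) : ℂ) := by
        rw [hbb]
        push_cast
        refine Finset.sum_congr rfl fun i _ => ?_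
        rw [mul_comm ((starRingEnd ℂ) (v i k)) (v i k), Complex.mul_conj,
          Complex.normSq_eq_norm_sq]
        push_cast
        ring
      calc bb k ^ 2 = ‖∑ i, (c i : ℂ) * ((starRingEnd ℂ) (v i k) * v i k)‖ ^ 2 := by
            rw [hdiag, Complex.norm_real, Real.norm_eq_abs, sq_abs]
        _ ≤ ∑ l, ‖∑ i, (c i : ℂ) * ((starRingEnd ℂ) (v i k) * v i l)‖ ^ 2 :=
            Finset.single_le_sum
              (f := fun l => ‖∑ i, (c i : ℂ) * ((starRingEnd ℂ) (v i k) * v i l)‖ ^ 2)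
              (fun l _ => by positivity) (Finset.mem_univ k)
    have hgram : ∑ i, ∑ j, c i * c j * ‖∑ k, (starRingEnd ℂ) (v i k) * v j k‖ ^ 2
        = (1 - μ2) * ∑ i, c i ^ 2 := by
      have hterm : ∀ i j, c i * c j * ‖∑ k, (starRingEnd ℂ) (v i k) * v j k‖ ^ 2
          = μ2 * (c i * c j) + (if j = i then (1 - μ2) * c i ^ 2 else 0) := by
        intro i j
        by_cases h : j = i
        · subst h; rw [hgd]; simp; ring
        · rw [hgoff i j (Ne.symm h)]; simp [h]; ring
      simp only [hterm, Finset.sum_add_distrib, Finset.sum_ite_eq', Finset.mem_univ, if_true]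
      have h0 : ∀ i : Fin N, ∑ j, μ2 * (c i * c j) = 0 := by
        intro i
        have hh : ∀ j, μ2 * (c i * c j) = (μ2 * c i) * c j := fun _ => by ring
        simp only [hh, ← Finset.mul_sum, hc0, mul_zero]
      simp only [h0, Finset.sum_const_zero, zero_add, ← Finset.mul_sum]
    have hμ2le : μ2 ≤ 1 := by
      rw [hμ2, div_le_one (by nlinarith)]; nlinarith
    have hS : ∑ i, c i ^ 2 ≤ (1 - μ2) * ∑ k, y k ^ 2 := by
      have hCS := Finset.sum_mul_sq_le_sq_mul_sq Finset.univ y bb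
      have h1 : (∑ k, y k * bb k) ^ 2 ≤ (∑ k, y k ^ 2) * ((1 - μ2) * ∑ i, c i ^ 2) := by
        calc (∑ k, y k * bb k) ^ 2 ≤ (∑ k, y k ^ 2) * ∑ k, bb k ^ 2 := hCS
          _ ≤ (∑ k, y k ^ 2) * ((1 - μ2) * ∑ i, c i ^ 2) := by
              apply mul_le_mul_of_nonneg_left _ (by positivity)
              rw [← hgram, ← hBg]; exact hbB
      have h1' : (∑ i, c i ^ 2) ^ 2 ≤ (∑ k, y k ^ 2) * ((1 - μ2) * ∑ i, c i ^ 2) := by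
        calc (∑ i, c i ^ 2) ^ 2 = (∑ k, y k * bb k) ^ 2 := by rw [hSb]
          _ ≤ (∑ k, y k ^ 2) * ((1 - μ2) * ∑ i, c i ^ 2) := h1
      have hSnn : 0 ≤ ∑ i, c i ^ 2 := by positivity
      have hYnn : 0 ≤ ∑ k, y k ^ 2 := by positivity
      rcases eq_or_lt_of_le hSnn with h0 | hpos
      · rw [← h0]
        exact mul_nonneg (by linarith) hYnn
      · nlinarith [h1', hpos]
    -- final computation
    have hxRx : x ⬝ᵥ R *ᵥ x = ∑ i, (∑ k, x k * ‖v i k‖ ^ 2) ^ 2 := by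
      subst hR
      simp only [dotProduct, Matrix.mulVec, Matrix.of_apply, Finset.sum_mul, Finset.mul_sum, sq]
      rw [sum_swap3']
      refine Finset.sum_congr rfl fun i _ => Finset.sum_congr rfl fun k _ =>
        Finset.sum_congr rfl fun l _ => ?_
      ring
    have hci : ∀ i, ∑ k, x k * ‖v i k‖ ^ 2 = c i + t := by
      intro i
      rw [hc]
      have h5 : ∀ k, x k * ‖v i k‖ ^ 2 = y k * ‖v i k‖ ^ 2 + t * ‖v i k‖ ^ 2 := by
        intro k; rw [hy]; ring
      simp only [h5, Finset.sum_add_distrib, ← Finset.mul_sum, hunit i, mul_one]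
    have hsumx : ∑ k, x k = r * t := by rw [ht]; field_simp
    have hsumsq : ∑ k, x k ^ 2 = ∑ k, y k ^ 2 + r * t ^ 2 := by
      have h6 : ∀ k, x k ^ 2 = y k ^ 2 + 2 * t * y k + t ^ 2 := by intro k; rw [hy]; ring
      simp only [h6, Finset.sum_add_distrib, Finset.sum_const, Finset.card_univ,
        Fintype.card_fin, nsmul_eq_mul, ← Finset.mul_sum, hy0, mul_zero]
      ring
    have hquad : x ⬝ᵥ (a • (1 : Matrix (Fin r) (Fin r) ℝ)
        + b • Matrix.of (fun _ _ => (1:ℝ)) - R) *ᵥ x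
        = a * ∑ k, x k ^ 2 + b * (∑ k, x k) ^ 2 - x ⬝ᵥ R *ᵥ x := by
      rw [Matrix.sub_mulVec, Matrix.add_mulVec, dotProduct_sub, dotProduct_add,
        Matrix.smul_mulVec, Matrix.smul_mulVec, Matrix.one_mulVec,
        dotProduct_smul, dotProduct_smul, smul_eq_mul, smul_eq_mul]
      congr 2
      · rw [dotProduct]
        exact congrArg (a * ·) (Finset.sum_congr rfl fun k _ => (sq (x k)).symm)
      · congr 1
        rw [dotProduct, sq]
        simp only [Matrix.mulVec, dotProduct, Matrix.of_apply, one_mul]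
        rw [Finset.sum_mul]
    rw [hquad, hxRx]
    have hsc : ∑ i, (∑ k, x k * ‖v i k‖ ^ 2) ^ 2 = ∑ i, c i ^ 2 + (N:ℝ) * t ^ 2 := by
      simp only [hci]
      have h7 : ∀ i : Fin N, (c i + t) ^ 2 = c i ^ 2 + 2 * t * c i + t ^ 2 := fun i => by ring
      simp only [h7, Finset.sum_add_distrib, Finset.sum_const, Finset.card_univ,
        Fintype.card_fin, nsmul_eq_mul, ← Finset.mul_sum, hc0, mul_zero]
      ring
    rw [hsc, hsumx, hsumsq]
    have key : a * r + b * r ^ 2 = N := by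
      rw [ha, hb]; field_simp; ring
    have expand : a * (∑ k, y k ^ 2 + ↑r * t ^ 2) + b * (↑r * t) ^ 2
        - (∑ i, c i ^ 2 + ↑N * t ^ 2)
        = (a * ∑ k, y k ^ 2 - ∑ i, c i ^ 2) + (a * ↑r + b * ↑r ^ 2 - ↑N) * t ^ 2 := by ring
    rw [expand, key]
    simp only [sub_self, zero_mul, add_zero]
    rw [haμ]
    linarith [hS]
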